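/- arXiv:2506.18616 — 2 statements merged into one kernel-verified Lean document; each statement's English description precedes it below -/
import Mathlib

section
/- Let (X_n, A_n)_{n∈ℕ} be measurable spaces, (κ_n : ∏_{i≤n} X_i ⇝ X_{n+1})_{n∈ℕ} Markov kernels, and x_0 ∈ X_0. If (A_n)_{n∈ℕ} is a non-increasing sequence of measurable cylinders of ∏_{k≥1} X_k with empty intersection, then P_0(x_0, A_n) → 0 as n → ∞, where P_0(x_0,·) is the additive content on measurable cylinders induced by the kernels: P_0(x_0, B × ∏_{k>b} X_k) = η_{0,b}(x_0, B). Consequently P_0(x_0,·) is σ-sub-additive on measurable cylinders. -/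
open MeasureTheory ProbabilityTheory Preorder Filter
open scoped ENNReal ProbabilityTheory Topology

variable {X : ℕ → Type*} [∀ n, MeasurableSpace (X n)]

/-- Canonical map gluing a trajectory up to time `b` with a point of `X (b + 1)` into a
trajectory up to time `b + 1`. -/
def IicProdSucc (b : ℕ) (p : (Π i : Finset.Iic b, X i) × X (b + 1)) :
    Π i : Finset.Iic (b + 1), X i :=
  fun i ↦ if h : i.1 ≤ b then p.1 ⟨i.1, Finset.mem_Iic.2 h⟩
    else cast (congrArg X (Nat.le_antisymm (Finset.mem_Iic.1 i.2)
      (Nat.lt_of_not_le h))).symm p.2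

/-- The partial trajectory kernel `η_{a,b}` built from the kernels `κ n`: for `b ≤ a` it is the
deterministic kernel given by the restriction map, and `η_{a,b+1}` is obtained from `η_{a,b}` by
composing with the product of the identity kernel and `κ b`. -/
noncomputable def partialTraj (κ : ∀ n, Kernel (Π i : Finset.Iic n, X i) (X (n + 1))) (a : ℕ) :
    (b : ℕ) → Kernel (Π i : Finset.Iic a, X i) (Π i : Finset.Iic b, X i)
  | 0 => Kernel.deterministic (frestrictLe₂ (Nat.zero_le a)) (measurable_frestrictLe₂ _)
  | b + 1 =>
    if h : b + 1 ≤ a then Kernel.deterministic (frestrictLe₂ h) (measurable_frestrictLe₂ h)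
    else ((Kernel.id ×ₖ κ b) ∘ₖ partialTraj κ a b).map (IicProdSucc b)

/-- The kernel `η_{a,b} = κ_a ⊗ₖ … ⊗ₖ κ_{b-1}` from `Π i : Iic a, X i` to `Π i : Ioc a b, X i`,
realized as the restriction to the coordinates in `(a, b]` of the partial trajectory kernel. -/
noncomputable def iocTraj (κ : ∀ n, Kernel (Π i : Finset.Iic n, X i) (X (n + 1))) (a b : ℕ) :
    Kernel (Π i : Finset.Iic a, X i) (Π i : Finset.Ioc a b, X i) :=
  (partialTraj κ a b).map
    (fun y (i : Finset.Ioc a b) ↦ y ⟨i.1, Finset.mem_Iic.2 (Finset.mem_Ioc.1 i.2).2⟩)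

/-- The element of `Π i : Iic 0, X i` associated to a point `x₀ : X 0`. -/
def toIic0 (x₀ : X 0) : Π i : Finset.Iic 0, X i :=
  fun i ↦ cast (congrArg X (Nat.le_zero.1 (Finset.mem_Iic.1 i.2))).symm x₀



set_option linter.unusedSectionVars false
set_option maxHeartbeats 1000000

section Auxiliary

variable (κ : ∀ n, Kernel (Π i : Finset.Iic n, X i) (X (n + 1))) [∀ n, IsMarkovKernel (κ n)]

lemma partialTraj_of_le {a b : ℕ} (h : b ≤ a) :
    partialTraj κ a b = Kernel.deterministic (frestrictLe₂ h) (measurable_frestrictLe₂ h) := by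
  cases b with
  | zero => rfl
  | succ b => rw [partialTraj, dif_pos h]

lemma partialTraj_succ_of_not_le (a b : ℕ) (h : ¬ (b + 1 ≤ a)) :
    partialTraj κ a (b + 1) = ((Kernel.id ×ₖ κ b) ∘ₖ partialTraj κ a b).map (IicProdSucc b) := by
  rw [partialTraj, dif_neg h]

lemma partialTraj_self (a : ℕ) : partialTraj κ a a = Kernel.id := by
  rw [partialTraj_of_le κ le_rfl]; rfl

lemma measurable_IicProdSucc (b : ℕ) : Measurable (IicProdSucc (X := X) b) := by
  refine measurable_pi_lambda _ (fun i => ?_)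
  obtain ⟨i, hi⟩ := i
  by_cases h : i ≤ b
  · simp only [IicProdSucc, dif_pos h]
    exact measurable_fst.eval
  · have e : i = b + 1 := Nat.le_antisymm (Finset.mem_Iic.1 hi) (Nat.lt_of_not_le h)
    subst e
    simp only [IicProdSucc, dif_neg h]
    have : ∀ p : (Π i : Finset.Iic b, X i) × X (b + 1),
        cast (congrArg X (Nat.le_antisymm (Finset.mem_Iic.1 hi) (Nat.lt_of_not_le h))).symm p.2
          = p.2 := fun p => cast_eq_iff_heq.2 HEq.rfl
    simp only [this]
    exact measurable_snd

instance instMarkovPartialTraj (a b : ℕ) : IsMarkovKernel (partialTraj κ a b) := by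
  induction b with
  | zero => rw [partialTraj_of_le κ (Nat.zero_le a)]; infer_instance
  | succ b ih =>
    by_cases h : b + 1 ≤ a
    · rw [partialTraj_of_le κ h]; infer_instance
    · rw [partialTraj_succ_of_not_le κ a b h]
      exact Kernel.IsMarkovKernel.map _ (measurable_IicProdSucc b)

lemma frestrictLe₂_comp_IicProdSucc {c b : ℕ} (h : c ≤ b) :
    (frestrictLe₂ (π := X) (h.trans (Nat.le_succ b))) ∘ (IicProdSucc b)
      = (frestrictLe₂ h) ∘ Prod.fst := by
  funext p
  funext i
  simp only [Function.comp_apply, frestrictLe₂, Finset.restrict₂, IicProdSucc]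
  rw [dif_pos (le_trans (Finset.mem_Iic.1 i.2) h)]

lemma deterministic_congr {α β : Type*} [MeasurableSpace α] [MeasurableSpace β]
    {f g : α → β} (hf : Measurable f) (h : f = g) :
    Kernel.deterministic f hf = Kernel.deterministic g (h ▸ hf) := by subst h; rfl

lemma partialTraj_map_frestrictLe₂ (a : ℕ) {b c : ℕ} (hbc : b ≤ c) :
    (partialTraj κ a c).map (frestrictLe₂ hbc) = partialTraj κ a b := by
  induction c, hbc using Nat.le_induction with
  | base => exact Kernel.map_id _
  | succ c hbc ih =>
    by_cases h : c + 1 ≤ a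
    · rw [partialTraj_of_le κ h, partialTraj_of_le κ ((hbc.trans (Nat.le_succ c)).trans h),
        ← Kernel.deterministic_comp_eq_map (measurable_frestrictLe₂ _),
        Kernel.deterministic_comp_deterministic]
      rfl
    · rw [partialTraj_succ_of_not_le κ a c h,
        ← Kernel.deterministic_comp_eq_map (measurable_frestrictLe₂ (hbc.trans (Nat.le_succ c))),
        ← Kernel.deterministic_comp_eq_map (measurable_IicProdSucc c),
        ← Kernel.comp_assoc,
        Kernel.deterministic_comp_deterministic,
        deterministic_congr _ (frestrictLe₂_comp_IicProdSucc hbc),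
        ← Kernel.deterministic_comp_deterministic measurable_fst (measurable_frestrictLe₂ hbc),
        Kernel.comp_assoc,
        ← Kernel.comp_assoc (Kernel.deterministic Prod.fst measurable_fst),
        Kernel.deterministic_comp_eq_map measurable_fst,
        ← Kernel.fst_eq, Kernel.fst_prod, Kernel.id_comp,
        Kernel.deterministic_comp_eq_map, ih]

lemma partialTraj_comp {a b : ℕ} (hab : a ≤ b) (c : ℕ) :
    partialTraj κ b c ∘ₖ partialTraj κ a b = partialTraj κ a c := by
  rcases le_total c b with h | h
  · rw [partialTraj_of_le κ h, Kernel.deterministic_comp_eq_map,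
      partialTraj_map_frestrictLe₂]
  · induction c, h using Nat.le_induction with
    | base => rw [partialTraj_self, Kernel.id_comp]
    | succ c hbc ih =>
      have h1 : ¬ (c + 1 ≤ b) := by omega
      have h2 : ¬ (c + 1 ≤ a) := by omega
      rw [partialTraj_succ_of_not_le κ b c h1, partialTraj_succ_of_not_le κ a c h2,
        ← Kernel.deterministic_comp_eq_map (measurable_IicProdSucc c),
        ← Kernel.deterministic_comp_eq_map (measurable_IicProdSucc c),
        Kernel.comp_assoc, Kernel.comp_assoc, ih]

lemma partialTraj_succ_self (a : ℕ) :
    partialTraj κ a (a + 1) = (Kernel.id ×ₖ κ a).map (IicProdSucc a) := by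
  rw [partialTraj_succ_of_not_le κ a a (by omega), partialTraj_self, Kernel.comp_id]

lemma partialTraj_apply_step (k b : ℕ) {T : Set (Π i : Finset.Iic b, X i)}
    (hT : MeasurableSet T) (x : Π i : Finset.Iic k, X i) :
    partialTraj κ k b x T
      = ∫⁻ y, partialTraj κ (k + 1) b (IicProdSucc k (x, y)) T ∂(κ k x) := by
  rw [← partialTraj_comp κ (Nat.le_succ k) b, Kernel.comp_apply' _ _ _ hT,
    partialTraj_succ_self, Kernel.map_apply _ (measurable_IicProdSucc k),
    MeasureTheory.lintegral_map (Kernel.measurable_coe _ hT) (measurable_IicProdSucc k),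
    Kernel.prod_apply, Kernel.id_apply,
    MeasureTheory.lintegral_prod (fun p => partialTraj κ (k + 1) b (IicProdSucc k p) T)
      (((Kernel.measurable_coe _ hT).comp (measurable_IicProdSucc k)).aemeasurable),
    lintegral_dirac' x (show Measurable fun (z : Π i : Finset.Iic k, X i) =>
        ∫⁻ y, partialTraj κ (k + 1) b (IicProdSucc k (z, y)) T ∂(κ k x) from
      ((Kernel.measurable_coe (partialTraj κ (k + 1) b) hT).comp
        (measurable_IicProdSucc k)).lintegral_prod_right')]

lemma aux_tendsto (x₀ : X 0) (N : ℕ → ℕ) (hN : Monotone N)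
    (T : ∀ n, Set (Π i : Finset.Iic (N n), X i)) (hT : ∀ n, MeasurableSet (T n))
    (hTanti : ∀ n, T (n + 1) ⊆ frestrictLe₂ (hN (Nat.le_succ n)) ⁻¹' T n)
    (hTempty : ∀ z : (k : ℕ) → Π i : Finset.Iic k, X i,
      (∀ (j k : ℕ) (h : j ≤ k), frestrictLe₂ h (z k) = z j) → z 0 = toIic0 x₀ →
      ∃ n, z (N n) ∉ T n) :
    Tendsto (fun n => partialTraj κ 0 (N n) (toIic0 x₀) (T n)) atTop (𝓝 0) := by
  classical
  have hstep' : ∀ n k (z : Π i : Finset.Iic k, X i),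
      partialTraj κ k (N (n + 1)) z (T (n + 1)) ≤ partialTraj κ k (N n) z (T n) := by
    intro n k z
    calc partialTraj κ k (N (n + 1)) z (T (n + 1))
        ≤ partialTraj κ k (N (n + 1)) z (frestrictLe₂ (hN (Nat.le_succ n)) ⁻¹' T n) :=
          measure_mono (hTanti n)
      _ = partialTraj κ k (N n) z (T n) := by
          rw [← Kernel.map_apply' _ (measurable_frestrictLe₂ _) _ (hT n),
            partialTraj_map_frestrictLe₂]
  have hfanti : ∀ k (z : Π i : Finset.Iic k, X i),
      Antitone fun n => partialTraj κ k (N n) z (T n) :=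
    fun k z => antitone_nat_of_succ_le fun n => hstep' n k z
  have htend : Tendsto (fun n => partialTraj κ 0 (N n) (toIic0 x₀) (T n)) atTop
      (𝓝 (⨅ n, partialTraj κ 0 (N n) (toIic0 x₀) (T n))) :=
    tendsto_atTop_iInf (hfanti 0 _)
  suffices h0 : (⨅ n, partialTraj κ 0 (N n) (toIic0 x₀) (T n)) = 0 by rwa [h0] at htend
  by_contra hL
  have hgstep : ∀ k (z : Π i : Finset.Iic k, X i),
      (⨅ n, partialTraj κ k (N n) z (T n))
        = ∫⁻ y, ⨅ n, partialTraj κ (k + 1) (N n) (IicProdSucc k (z, y)) (T n) ∂(κ k z) := by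
    intro k z
    calc (⨅ n, partialTraj κ k (N n) z (T n))
        = ⨅ n, ∫⁻ y, partialTraj κ (k + 1) (N n) (IicProdSucc k (z, y)) (T n) ∂(κ k z) :=
          iInf_congr fun n => partialTraj_apply_step κ k (N n) (hT n) z
      _ = ∫⁻ y, ⨅ n, partialTraj κ (k + 1) (N n) (IicProdSucc k (z, y)) (T n) ∂(κ k z) := by
          refine (lintegral_iInf (fun n => ?_) (fun i j hij y => ?_) ?_).symm
          · exact (Kernel.measurable_coe _ (hT n)).comp
              ((measurable_IicProdSucc k).comp measurable_prodMk_left)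
          · exact hfanti (k + 1) _ hij
          · refine ne_of_lt (lt_of_le_of_lt ?_ ENNReal.one_lt_top)
            refine le_trans (lintegral_mono fun y => prob_le_one) ?_
            rw [lintegral_one, measure_univ]
  have key : ∀ k (z : Π i : Finset.Iic k, X i),
      (⨅ n, partialTraj κ k (N n) z (T n)) ≠ 0 →
      ∃ y, (⨅ n, partialTraj κ (k + 1) (N n) (IicProdSucc k (z, y)) (T n)) ≠ 0 := by
    intro k z hz
    by_contra hcon
    push_neg at hcon
    apply hz
    rw [hgstep k z]
    simp only [hcon, lintegral_zero]
  choose Y hY using key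
  let x' : (k : ℕ) → {z : Π i : Finset.Iic k, X i //
      (⨅ n, partialTraj κ k (N n) z (T n)) ≠ 0} :=
    fun k => Nat.rec ⟨toIic0 x₀, hL⟩
      (fun k p => ⟨IicProdSucc k (p.1, Y k p.1 p.2), hY k p.1 p.2⟩) k
  let x : (k : ℕ) → Π i : Finset.Iic k, X i := fun k => (x' k).1
  have hxsucc : ∀ k, ∃ y, x (k + 1) = IicProdSucc k (x k, y) := fun k => ⟨_, rfl⟩
  have hgx : ∀ k, (⨅ n, partialTraj κ k (N n) (x k) (T n)) ≠ 0 := fun k => (x' k).2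
  have hcoh : ∀ (j k : ℕ) (h : j ≤ k), frestrictLe₂ h (x k) = x j := by
    intro j k h
    induction k, h using Nat.le_induction with
    | base => rfl
    | succ k hjk ih =>
      rw [← ih]
      obtain ⟨y, hy⟩ := hxsucc k
      rw [hy]
      funext i
      have hik : i.1 ≤ k := le_trans (Finset.mem_Iic.1 i.2) hjk
      show IicProdSucc k (x k, y) ⟨i.1, _⟩ = x k ⟨i.1, _⟩
      simp only [IicProdSucc]
      rw [dif_pos hik]
  obtain ⟨n, hn⟩ := hTempty x hcoh rfl
  apply hgx (N n)
  refine le_antisymm ?_ zero_le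
  refine le_trans (iInf_le _ n) ?_
  rw [partialTraj_self, Kernel.id_apply, Measure.dirac_apply' _ (hT n),
    Set.indicator_of_notMem hn]

/-- Restriction of a full positive-coordinate trajectory to the coordinates in `(0, b]`. -/
def projIoc (b : ℕ) (ω : Π n : {n : ℕ // 0 < n}, X n) (i : Finset.Ioc 0 b) : X i :=
  ω ⟨i.1, (Finset.mem_Ioc.1 i.2).1⟩

/-- Restriction of a trajectory up to time `b` to the coordinates in `(0, b]`. -/
def restrictIoc (b : ℕ) (x : Π i : Finset.Iic b, X i) (i : Finset.Ioc 0 b) : X i :=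
  x ⟨i.1, Finset.mem_Iic.2 (Finset.mem_Ioc.1 i.2).2⟩

lemma measurable_projIoc (b : ℕ) : Measurable (projIoc (X := X) b) :=
  measurable_pi_lambda _ fun _ => measurable_pi_apply _

lemma measurable_restrictIoc (b : ℕ) : Measurable (restrictIoc (X := X) b) :=
  measurable_pi_lambda _ fun _ => measurable_pi_apply _

lemma exists_ioc_rep {t : Set (Π n : {n : ℕ // 0 < n}, X n)}
    (ht : t ∈ measurableCylinders (fun n : {n : ℕ // 0 < n} ↦ X n)) :
    ∃ (b : ℕ) (B : Set (Π i : Finset.Ioc 0 b, X i)),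
      MeasurableSet B ∧ t = projIoc b ⁻¹' B := by
  obtain ⟨s, S, hS, rfl⟩ := (mem_measurableCylinders t).1 ht
  refine ⟨s.sup (fun i => i.1),
    (fun (z : Π i : Finset.Ioc 0 (s.sup (fun i => i.1)), X i) (j : s) =>
      z ⟨j.1.1, Finset.mem_Ioc.2 ⟨j.1.2, Finset.le_sup j.2⟩⟩) ⁻¹' S,
    hS.preimage (measurable_pi_lambda _ fun _ => measurable_pi_apply _), rfl⟩

include κ in
lemma nonempty_iic (x₀ : X 0) (k : ℕ) : Nonempty (Π i : Finset.Iic k, X i) := by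
  induction k with
  | zero => exact ⟨toIic0 x₀⟩
  | succ k ih =>
    obtain ⟨z⟩ := ih
    have hX : Nonempty (X (k + 1)) := by
      by_contra h
      rw [not_nonempty_iff] at h
      have h1 : (κ k z) Set.univ = 1 := measure_univ
      rw [Set.univ_eq_empty_iff.2 h, measure_empty] at h1
      exact zero_ne_one h1
    obtain ⟨y⟩ := hX
    exact ⟨IicProdSucc k (z, y)⟩

include κ in
lemma nonempty_X (x₀ : X 0) (k : {n : ℕ // 0 < n}) : Nonempty (X k.1) := by
  obtain ⟨z⟩ := nonempty_iic κ x₀ k.1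
  exact ⟨z ⟨k.1, Finset.mem_Iic.2 le_rfl⟩⟩

end Auxiliary

/-- The additive content `P_0(x₀, ·)` induced by the kernels on the measurable cylinders of
`∏_{k ≥ 1} X_k` tends to `0` along every non-increasing sequence of measurable cylinders with
empty intersection; consequently it is σ-sub-additive on measurable cylinders. -/
theorem tendsto_zero_and_sigma_subadditive_content
    (κ : ∀ n, Kernel (Π i : Finset.Iic n, X i) (X (n + 1))) [∀ n, IsMarkovKernel (κ n)]
    (x₀ : X 0)
    (m : AddContent ℝ≥0∞ (measurableCylinders (fun n : {n : ℕ // 0 < n} ↦ X n)))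
    (hm : ∀ (b : ℕ) (B : Set (Π i : Finset.Ioc 0 b, X i)), MeasurableSet B →
      m (cylinder ((Finset.Ioc 0 b).subtype (fun n ↦ 0 < n))
          ((fun (z : Π j : ((Finset.Ioc 0 b).subtype (fun n ↦ 0 < n)), X j.1.1)
              (i : Finset.Ioc 0 b) ↦
            z ⟨⟨i.1, (Finset.mem_Ioc.1 i.2).1⟩, Finset.mem_subtype.2 i.2⟩) ⁻¹' B)) =
        iocTraj κ 0 b (toIic0 x₀) B) :
    (∀ A : ℕ → Set (Π n : {n : ℕ // 0 < n}, X n),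
      (∀ n, A n ∈ measurableCylinders (fun n : {n : ℕ // 0 < n} ↦ X n)) → Antitone A →
      (⋂ n, A n) = ∅ → Tendsto (fun n ↦ m (A n)) atTop (𝓝 0)) ∧
    (∀ A : ℕ → Set (Π n : {n : ℕ // 0 < n}, X n),
      (∀ n, A n ∈ measurableCylinders (fun n : {n : ℕ // 0 < n} ↦ X n)) →
      (⋃ n, A n) ∈ measurableCylinders (fun n : {n : ℕ // 0 < n} ↦ X n) →
      m (⋃ n, A n) ≤ ∑' n, m (A n)) := by
  classical
  have hring : IsSetRing (measurableCylinders (fun n : {n : ℕ // 0 < n} ↦ X n)) :=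
    ⟨empty_mem_measurableCylinders _, fun _ _ hs ht => union_mem_measurableCylinders hs ht,
      fun _ _ hs ht => diff_mem_measurableCylinders hs ht⟩
  have hval : ∀ (b : ℕ) (B : Set (Π i : Finset.Ioc 0 b, X i)), MeasurableSet B →
      m (projIoc b ⁻¹' B) = partialTraj κ 0 b (toIic0 x₀) (restrictIoc b ⁻¹' B) := by
    intro b B hB
    have h1 := hm b B hB
    have h2 : cylinder ((Finset.Ioc 0 b).subtype (fun n ↦ 0 < n))
        ((fun (z : Π j : ((Finset.Ioc 0 b).subtype (fun n ↦ 0 < n)), X j.1.1)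
            (i : Finset.Ioc 0 b) ↦
          z ⟨⟨i.1, (Finset.mem_Ioc.1 i.2).1⟩, Finset.mem_subtype.2 i.2⟩) ⁻¹' B)
        = projIoc b ⁻¹' B := rfl
    rw [h2] at h1
    have h3 := Kernel.map_apply' (partialTraj κ 0 b)
      (show Measurable (fun (y : Π i : Finset.Iic b, X i) (i : Finset.Ioc 0 b) ↦
          y ⟨i.1, Finset.mem_Iic.2 (Finset.mem_Ioc.1 i.2).2⟩) from
        measurable_pi_lambda _ fun _ => measurable_pi_apply _) (toIic0 x₀) hB
    rw [h1, iocTraj, h3]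
    rfl
  have h1main : ∀ A : ℕ → Set (Π n : {n : ℕ // 0 < n}, X n),
      (∀ n, A n ∈ measurableCylinders (fun n : {n : ℕ // 0 < n} ↦ X n)) → Antitone A →
      (⋂ n, A n) = ∅ → Tendsto (fun n ↦ m (A n)) atTop (𝓝 0) := by
    intro A hA hanti hinter
    have hrep : ∃ (N : ℕ → ℕ) (hN : Monotone N)
        (B' : (n : ℕ) → Set (Π i : Finset.Ioc 0 (N n), X i)),
        (∀ n, MeasurableSet (B' n)) ∧ (∀ n, A n = projIoc (N n) ⁻¹' B' n) := by
      choose b B hBmeas hBeq using fun n => exists_ioc_rep (hA n)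
      refine ⟨fun n => (Finset.Iic n).sup b,
        fun i j hij => Finset.sup_mono (Finset.Iic_subset_Iic.2 hij),
        fun n => (fun (z : Π i : Finset.Ioc 0 ((Finset.Iic n).sup b), X i)
            (i : Finset.Ioc 0 (b n)) =>
          z ⟨i.1, Finset.mem_Ioc.2 ⟨(Finset.mem_Ioc.1 i.2).1,
            le_trans (Finset.mem_Ioc.1 i.2).2
              (Finset.le_sup (Finset.mem_Iic.2 le_rfl))⟩⟩) ⁻¹' B n,
        fun n => (hBmeas n).preimage (measurable_pi_lambda _ fun _ => measurable_pi_apply _),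
        fun n => ?_⟩
      rw [hBeq n]
      rfl
    obtain ⟨N, hNmono, B', hB'meas, hAeq⟩ := hrep
    have hTanti : ∀ n, (restrictIoc (N (n + 1)) ⁻¹' B' (n + 1))
        ⊆ frestrictLe₂ (hNmono (Nat.le_succ n)) ⁻¹' (restrictIoc (N n) ⁻¹' B' n) := by
      intro n x hx
      obtain ⟨ω, hω⟩ : ∃ ω : Π k : {n : ℕ // 0 < n}, X k.1,
          ∀ (k : {n : ℕ // 0 < n}) (h : k.1 ≤ N (n + 1)), ω k = x ⟨k.1, Finset.mem_Iic.2 h⟩ :=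
        ⟨fun k => if h : k.1 ≤ N (n + 1) then x ⟨k.1, Finset.mem_Iic.2 h⟩
          else Classical.choice (nonempty_X κ x₀ k), fun k h => dif_pos h⟩
      have hmem1 : ω ∈ A (n + 1) := by
        rw [hAeq (n + 1)]
        show projIoc (N (n + 1)) ω ∈ B' (n + 1)
        have he : projIoc (N (n + 1)) ω = restrictIoc (N (n + 1)) x := by
          funext i
          exact hω ⟨i.1, (Finset.mem_Ioc.1 i.2).1⟩ (Finset.mem_Ioc.1 i.2).2
        rw [he]
        exact hx
      have hmem2 := hanti (Nat.le_succ n) hmem1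
      rw [hAeq n] at hmem2
      have he2 : projIoc (N n) ω
          = restrictIoc (N n) (frestrictLe₂ (hNmono (Nat.le_succ n)) x) := by
        funext i
        exact hω ⟨i.1, (Finset.mem_Ioc.1 i.2).1⟩
          (le_trans (Finset.mem_Ioc.1 i.2).2 (hNmono (Nat.le_succ n)))
      show restrictIoc (N n) (frestrictLe₂ (hNmono (Nat.le_succ n)) x) ∈ B' n
      rw [← he2]
      exact hmem2
    have hTempty : ∀ z : (k : ℕ) → Π i : Finset.Iic k, X i,
        (∀ (j k : ℕ) (h : j ≤ k), frestrictLe₂ h (z k) = z j) → z 0 = toIic0 x₀ →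
        ∃ n, z (N n) ∉ restrictIoc (N n) ⁻¹' B' n := by
      intro z hz _
      by_contra hcon
      push_neg at hcon
      have hωA : ∀ n, (fun k : {n : ℕ // 0 < n} => z k.1 ⟨k.1, Finset.mem_Iic.2 le_rfl⟩)
          ∈ A n := by
        intro n
        rw [hAeq n]
        show projIoc (N n) (fun k : {n : ℕ // 0 < n} =>
          z k.1 ⟨k.1, Finset.mem_Iic.2 le_rfl⟩) ∈ B' n
        have he : projIoc (N n) (fun k : {n : ℕ // 0 < n} =>
            z k.1 ⟨k.1, Finset.mem_Iic.2 le_rfl⟩) = restrictIoc (N n) (z (N n)) := by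
          funext i
          show z i.1 ⟨i.1, _⟩ = z (N n) ⟨i.1, _⟩
          rw [← hz i.1 (N n) (Finset.mem_Ioc.1 i.2).2]
          rfl
        rw [he]
        exact hcon n
      have hmem : (fun k : {n : ℕ // 0 < n} => z k.1 ⟨k.1, Finset.mem_Iic.2 le_rfl⟩)
          ∈ ⋂ n, A n := Set.mem_iInter.2 hωA
      rw [hinter] at hmem
      exact hmem.elim
    have heq : (fun n => m (A n))
        = fun n => partialTraj κ 0 (N n) (toIic0 x₀) (restrictIoc (N n) ⁻¹' B' n) :=
      funext fun n => by rw [hAeq n]; exact hval (N n) (B' n) (hB'meas n)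
    rw [heq]
    exact aux_tendsto κ x₀ N hNmono _
      (fun n => (hB'meas n).preimage (measurable_restrictIoc _)) hTanti hTempty
  refine ⟨h1main, ?_⟩
  intro A hA hU
  have hDmem : ∀ n, (⋃ k ∈ Finset.range (n + 1), A k)
      ∈ measurableCylinders (fun n : {n : ℕ // 0 < n} ↦ X n) := by
    intro n
    induction n with
    | zero => simpa using hA 0
    | succ n ih =>
      have hD : (⋃ k ∈ Finset.range (n + 1 + 1), A k)
          = A (n + 1) ∪ ⋃ k ∈ Finset.range (n + 1), A k := by
        rw [Finset.range_add_one, Finset.set_biUnion_insert]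
      rw [hD]
      exact union_mem_measurableCylinders (hA _) ih
  have hCmem : ∀ n, ((⋃ k, A k) \ ⋃ k ∈ Finset.range (n + 1), A k)
      ∈ measurableCylinders (fun n : {n : ℕ // 0 < n} ↦ X n) :=
    fun n => diff_mem_measurableCylinders hU (hDmem n)
  have hCanti : Antitone (fun n => (⋃ k, A k) \ ⋃ k ∈ Finset.range (n + 1), A k) := by
    intro i j hij
    refine Set.diff_subset_diff_right ?_
    exact Set.biUnion_subset_biUnion_left (Finset.range_subset_range.2 (by omega))
  have hCempty : (⋂ n, (⋃ k, A k) \ ⋃ k ∈ Finset.range (n + 1), A k) = ∅ := by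
    refine Set.eq_empty_iff_forall_notMem.2 fun ω hω => ?_
    have h1 := Set.mem_iInter.1 hω
    obtain ⟨k, hk⟩ := Set.mem_iUnion.1 (h1 0).1
    exact (h1 k).2 (Set.mem_biUnion (Finset.mem_range.2 (by omega)) hk)
  have hCtend := h1main _ hCmem hCanti hCempty
  have hbound : ∀ n, m (⋃ k, A k) ≤ (∑ k ∈ Finset.range (n + 1), m (A k))
      + m ((⋃ k, A k) \ ⋃ k ∈ Finset.range (n + 1), A k) := by
    intro n
    have hsub : (⋃ k, A k) ⊆ (⋃ k ∈ Finset.range (n + 1), A k)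
        ∪ ((⋃ k, A k) \ ⋃ k ∈ Finset.range (n + 1), A k) := by
      intro ω hω
      by_cases h : ω ∈ ⋃ k ∈ Finset.range (n + 1), A k
      · exact Or.inl h
      · exact Or.inr ⟨hω, h⟩
    calc m (⋃ k, A k)
        ≤ m ((⋃ k ∈ Finset.range (n + 1), A k)
            ∪ ((⋃ k, A k) \ ⋃ k ∈ Finset.range (n + 1), A k)) :=
          addContent_mono hring.isSetSemiring hU
            (hring.union_mem (hDmem n) (hCmem n)) hsub
      _ ≤ m (⋃ k ∈ Finset.range (n + 1), A k)
            + m ((⋃ k, A k) \ ⋃ k ∈ Finset.range (n + 1), A k) :=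
          addContent_union_le hring (hDmem n) (hCmem n)
      _ ≤ (∑ k ∈ Finset.range (n + 1), m (A k))
            + m ((⋃ k, A k) \ ⋃ k ∈ Finset.range (n + 1), A k) :=
          add_le_add_left (addContent_biUnion_le hring fun k _ => hA k) _
  have htsum : Tendsto (fun n => (∑ k ∈ Finset.range (n + 1), m (A k))
      + m ((⋃ k, A k) \ ⋃ k ∈ Finset.range (n + 1), A k)) atTop
      (𝓝 ((∑' k, m (A k)) + 0)) := by
    refine Tendsto.add ?_ hCtend
    exact (ENNReal.tendsto_nat_tsum _).comp (tendsto_add_atTop_nat 1)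
  have := ge_of_tendsto' htsum hbound
  rwa [add_zero] at this
end

section
/- Let (X_n, A_n)_{n∈ℕ} be measurable spaces and (κ_n : ∏_{i≤n} X_i ⇝ X_{n+1})_{n∈ℕ} Markov kernels. For all natural numbers a ≤ b ≤ c, the composition of partial-trajectory kernels satisfies η_{b,c} ∘ η_{a,b} = η_{a,c} (as Markov kernels from ∏_{i≤a} X_i to ∏_{i≤c} X_i). -/
open MeasureTheory ProbabilityTheory Preorder Filter
open scoped ENNReal ProbabilityTheory Topology

variable {X : ℕ → Type*} [∀ n, MeasurableSpace (X n)]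

lemma partialTraj_le (κ : ∀ n, Kernel (Π i : Finset.Iic n, X i) (X (n + 1))) {a b : ℕ}
    (hba : b ≤ a) :
    partialTraj κ a b
      = Kernel.deterministic (frestrictLe₂ hba) (measurable_frestrictLe₂ hba) := by
  cases b with
  | zero => rfl
  | succ n => rw [partialTraj, dif_pos hba]

lemma partialTraj_self_s5 (κ : ∀ n, Kernel (Π i : Finset.Iic n, X i) (X (n + 1))) (b : ℕ) :
    partialTraj κ b b = Kernel.id := by
  rw [partialTraj_le κ le_rfl]
  rfl

/-- Composition of partial trajectory kernels: for `a ≤ b ≤ c`, `η_{b,c} ∘ η_{a,b} = η_{a,c}`. -/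
theorem partialTraj_comp_partialTraj (κ : ∀ n, Kernel (Π i : Finset.Iic n, X i) (X (n + 1)))
    [∀ n, IsMarkovKernel (κ n)] {a b c : ℕ} (hab : a ≤ b) (hbc : b ≤ c) :
    partialTraj κ b c ∘ₖ partialTraj κ a b = partialTraj κ a c := by
  induction c, hbc using Nat.le_induction with
  | base => rw [partialTraj_self_s5, Kernel.id_comp]
  | succ c hbc ih =>
    rw [partialTraj, dif_neg (by omega), show partialTraj κ a (c + 1)
        = ((Kernel.id ×ₖ κ c) ∘ₖ partialTraj κ a c).map (IicProdSucc c) by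
      rw [partialTraj, dif_neg (by omega)],
      ← Kernel.map_comp, Kernel.comp_assoc, ih]
end
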